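/- For every finite abelian group G and every r ∈ ℕ, every r-coloring of G admits a monochromatic symmetric subset of size at least |G|/r², i.e., ms(G, r) ≥ 1/r². -/

import Mathlib

open Finset

/-- ms(G, r) ≥ 1/r² for every finite abelian group G: every r-coloring admits a
monochromatic symmetric subset of size at least |G|/r². -/
theorem stmt_13 (G : Type) [AddCommGroup G] [Fintype G] (r : ℕ) (χ : G → Fin r) :
    ∃ A : Set G, (∃ c, ∀ a ∈ A, χ a = c) ∧
      (∃ x : G, A = (fun a => 2 • x - a) '' A) ∧
      (Fintype.card G : ℝ) / (r : ℝ) ^ 2 ≤ (A.ncard : ℝ) := by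
  classical
  have hr : 0 < r := Fin.pos_iff_nonempty.mpr ⟨χ 0⟩
  haveI : Nonempty (Fin r) := ⟨⟨0, hr⟩⟩
  set n := Fintype.card G with hn
  have hnpos : 0 < n := Fintype.card_pos
  set φ : G →+ G := AddMonoidHom.mk' (fun g => 2 • g) (fun a b => smul_add 2 a b) with hφ
  set H : AddSubgroup G := φ.range with hH
  haveI : Fintype (G ⧸ H) := Fintype.ofFinite _
  set q := Fintype.card (G ⧸ H) with hq
  set k := #(univ.filter fun x : G => 2 • x = (0:G)) with hk
  -- k = q
  have hkq : k = q := by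
    have h1 : Nat.card G = Nat.card (G ⧸ H) * Nat.card H :=
      AddSubgroup.card_eq_card_quotient_mul_card_addSubgroup H
    have h2 : Nat.card G = Nat.card (G ⧸ φ.ker) * Nat.card φ.ker :=
      AddSubgroup.card_eq_card_quotient_mul_card_addSubgroup φ.ker
    have h3 : Nat.card (G ⧸ φ.ker) = Nat.card H :=
      Nat.card_congr (QuotientAddGroup.quotientKerEquivRange φ).toEquiv
    have h4 : Nat.card φ.ker = k := by
      rw [Nat.card_eq_fintype_card, Fintype.card_subtype]
      congr 1
      apply filter_congr
      intro x _
      simp [AddMonoidHom.mem_ker, hφ]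
    have hHpos : 0 < Nat.card H := Nat.card_pos
    have heq : Nat.card (G ⧸ H) * Nat.card H = k * Nat.card H := by
      rw [← h1, h2, h3, h4, mul_comm]
    have := Nat.eq_of_mul_eq_mul_right hHpos heq
    rw [hq, ← Nat.card_eq_fintype_card, this]
  set ψ : G → Fin r × (G ⧸ H) := fun a => (χ a, QuotientAddGroup.mk a) with hψ
  set cF : Fin r × (G ⧸ H) → ℕ := fun t => #(univ.filter fun a => ψ a = t) with hcF
  have mkiff : ∀ a b : G, (QuotientAddGroup.mk a : G ⧸ H) = QuotientAddGroup.mk b ↔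
      ∃ y : G, 2 • y = b - a := by
    intro a b
    rw [QuotientAddGroup.eq]
    constructor
    · rintro ⟨y, hy⟩
      exact ⟨y, by simpa [hφ, neg_add_eq_sub] using hy⟩
    · rintro ⟨y, hy⟩
      exact ⟨y, by simpa [hφ, neg_add_eq_sub] using hy⟩
  have fibcard : ∀ a b : G, b ∈ univ.image (fun x : G => 2 • x - a) →
      #(univ.filter fun x : G => 2 • x - a = b) = k := by
    intro a b hb
    obtain ⟨x₀, -, hx₀⟩ := mem_image.mp hb
    have himg : (univ.filter fun x : G => 2 • x - a = b)
        = (univ.filter fun y : G => 2 • y = (0:G)).image (fun y => y + x₀) := by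
      ext z
      simp only [mem_filter, mem_univ, true_and, mem_image]
      constructor
      · intro hz
        refine ⟨z - x₀, ?_, by abel⟩
        have h2 : 2 • z = 2 • x₀ := sub_left_injective (hz.trans hx₀.symm)
        simp [smul_sub, h2]
      · rintro ⟨y, hy, rfl⟩
        rw [smul_add, hy, zero_add, hx₀]
    rw [himg, card_image_of_injective _ (add_left_injective x₀)]
  have imiff : ∀ a b : G, b ∈ univ.image (fun x : G => 2 • x - a) ↔
      (QuotientAddGroup.mk b : G ⧸ H) = QuotientAddGroup.mk a := by
    intro a b
    rw [mkiff b a, mem_image]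
    constructor
    · rintro ⟨x, -, hx⟩
      refine ⟨a - x, ?_⟩
      have h : 2 • x = b + a := by rw [← hx]; abel
      rw [smul_sub, h, two_smul]; abel
    · rintro ⟨y, hy⟩
      refine ⟨a - y, mem_univ _, ?_⟩
      rw [smul_sub, hy, two_smul]; abel
  have step4 : ∀ a : G, (∑ x : G, if χ a = χ (2 • x - a) then 1 else 0) = k * cF (ψ a) := by
    intro a
    rw [Finset.sum_comp (fun b => if χ a = χ b then (1:ℕ) else 0) (fun x : G => 2 • x - a)]
    rw [Finset.sum_congr rfl (fun b hb => by rw [fibcard a b hb])]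
    simp only [smul_eq_mul]
    rw [← Finset.mul_sum]
    congr 1
    rw [Finset.sum_boole, Nat.cast_id]
    congr 1
    ext b
    simp only [mem_filter, hψ, Prod.mk.injEq, mem_univ, true_and]
    rw [imiff]
    constructor
    · rintro ⟨him, hc⟩; exact ⟨hc.symm, him⟩
    · rintro ⟨hc, him⟩; exact ⟨him, hc.symm⟩
  set T := ∑ x : G, ∑ a : G, if χ a = χ (2 • x - a) then 1 else 0 with hT
  have hT2 : T = k * ∑ a : G, cF (ψ a) := by
    rw [hT, Finset.sum_comm, Finset.sum_congr rfl (fun a _ => step4 a), ← Finset.mul_sum]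
  have hSq : (∑ a : G, cF (ψ a)) = ∑ t : Fin r × (G ⧸ H), cF t ^ 2 := by
    rw [Finset.sum_comp cF ψ]
    simp only [smul_eq_mul]
    rw [Finset.sum_subset (subset_univ _) ?_]
    · exact Finset.sum_congr rfl fun t _ => by rw [pow_two]
    · intro t _ ht
      have hz : cF t = 0 := by
        rw [hcF, card_eq_zero, filter_eq_empty_iff]
        intro a _
        exact fun h => ht (h ▸ mem_image_of_mem ψ (mem_univ a))
      rw [hz, mul_zero]
  have hsum : ∑ t : Fin r × (G ⧸ H), cF t = n := by
    rw [hn, ← card_univ]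
    exact (Finset.card_eq_sum_card_fiberwise fun x _ => mem_univ (ψ x)).symm
  have hCSnat : n ^ 2 ≤ r * q * ∑ t : Fin r × (G ⧸ H), cF t ^ 2 := by
    have hcs := sq_sum_le_card_mul_sum_sq (s := (univ : Finset (Fin r × (G ⧸ H))))
      (f := fun t => (cF t : ℝ))
    have hcard : #(univ : Finset (Fin r × (G ⧸ H))) = r * q := by
      rw [card_univ, Fintype.card_prod, Fintype.card_fin]
    rw [hcard] at hcs
    rw [← hsum]
    exact_mod_cast hcs
  have hrT : n ^ 2 ≤ r * T := by
    rw [hT2, hSq, hkq]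
    calc n ^ 2 ≤ r * q * ∑ t : Fin r × (G ⧸ H), cF t ^ 2 := hCSnat
      _ = r * (q * ∑ t : Fin r × (G ⧸ H), cF t ^ 2) := by ring
  -- pigeonhole over x
  obtain ⟨x, -, hx⟩ : ∃ x ∈ (univ : Finset G),
      T ≤ n * ∑ a : G, if χ a = χ (2 • x - a) then 1 else 0 := by
    refine Finset.exists_le_of_sum_le univ_nonempty (le_of_eq ?_)
    calc ∑ _x : G, T = n * T := by rw [sum_const, card_univ, smul_eq_mul]
      _ = ∑ x : G, n * ∑ a : G, if χ a = χ (2 • x - a) then 1 else 0 := by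
          rw [← Finset.mul_sum, hT]
  set A : Fin r → Finset G := fun c => univ.filter fun a => χ a = c ∧ χ (2 • x - a) = c with hA
  have hgx : (∑ a : G, if χ a = χ (2 • x - a) then 1 else 0) = ∑ c : Fin r, #(A c) := by
    rw [Finset.sum_boole, Nat.cast_id]
    rw [Finset.card_eq_sum_card_fiberwise (f := χ) (t := univ) (fun a _ => mem_univ _)]
    apply Finset.sum_congr rfl
    intro c _
    rw [filter_filter]
    congr 1
    ext a
    simp only [hA, mem_filter, mem_univ, true_and]
    constructor
    · rintro ⟨h1, h2⟩; exact ⟨h2, h2 ▸ h1.symm⟩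
    · rintro ⟨h1, h2⟩; exact ⟨h1.trans h2.symm, h1⟩
  obtain ⟨c, -, hc⟩ : ∃ c ∈ (univ : Finset (Fin r)),
      (∑ c' : Fin r, #(A c')) ≤ r * #(A c) := by
    refine Finset.exists_le_of_sum_le univ_nonempty (le_of_eq ?_)
    calc ∑ _c : Fin r, ∑ c' : Fin r, #(A c')
        = r * ∑ c' : Fin r, #(A c') := by rw [sum_const, card_univ, Fintype.card_fin, smul_eq_mul]
      _ = ∑ c : Fin r, r * #(A c) := by rw [← Finset.mul_sum]
  have h7 : n ≤ r ^ 2 * #(A c) := by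
    have h6 : n * n ≤ n * (r ^ 2 * #(A c)) := by
      calc n * n = n ^ 2 := (pow_two n).symm
        _ ≤ r * T := hrT
        _ ≤ r * (n * ∑ a : G, if χ a = χ (2 • x - a) then 1 else 0) :=
            Nat.mul_le_mul_left r hx
        _ ≤ r * (n * (r * #(A c))) :=
            Nat.mul_le_mul_left r (Nat.mul_le_mul_left n (hgx ▸ hc))
        _ = n * (r ^ 2 * #(A c)) := by ring
    exact Nat.le_of_mul_le_mul_left h6 hnpos
  refine ⟨(A c : Set G), ⟨c, ?_⟩, ⟨x, ?_⟩, ?_⟩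
  · intro a ha
    rw [Finset.mem_coe, hA, mem_filter] at ha
    exact ha.2.1
  · ext b
    simp only [Set.mem_image, Finset.mem_coe, hA, mem_filter, mem_univ, true_and]
    constructor
    · rintro ⟨h1, h2⟩
      exact ⟨2 • x - b, ⟨h2, by rwa [sub_sub_cancel]⟩, sub_sub_cancel _ _⟩
    · rintro ⟨a, ⟨h1, h2⟩, rfl⟩
      exact ⟨h2, by rwa [sub_sub_cancel]⟩
  · rw [Set.ncard_coe_finset]
    have hr' : (0:ℝ) < (r:ℝ) ^ 2 := by positivity
    rw [div_le_iff₀ hr']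
    have h8 : (n : ℝ) ≤ ((r ^ 2 * #(A c) : ℕ) : ℝ) := by exact_mod_cast h7
    rw [mul_comm]
    push_cast at h8
    exact h8
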